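/- Let a and b be distinct, relatively prime positive integers, let E be a field, and let Φ : E[x,y] → E[t] be the ring homomorphism determined by Φ(x) = t^a and Φ(y) = t^b. Then the kernel of Φ is the principal ideal generated by x^b - y^a. -/

import Mathlib

open Polynomial

noncomputable def psi (E : Type*) [Field E] (a b : ℕ) :
    Polynomial (Polynomial E) →+* Polynomial E :=
  eval₂RingHom (expand E b).toRingHom (X ^ a)

lemma psi_apply {E : Type*} [Field E] (a b : ℕ) (f : Polynomial (Polynomial E)) :
    psi E a b f = f.eval₂ (expand E b).toRingHom (X ^ a) := rfl

lemma arith_key {a b i i' j : ℕ} (hcop : Nat.Coprime a b) (hi : i < b) (hi' : i' < b)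
    (hle : a * i' ≤ a * i + b * j) (hdvd : b ∣ a * i + b * j - a * i') : i' = i := by
  obtain ⟨k, hk⟩ := hdvd
  have heq : a * i + b * j = a * i' + b * k := by omega
  have hmod : a * i ≡ a * i' [MOD b] := by
    unfold Nat.ModEq
    calc a * i % b = (a * i + b * j) % b := (Nat.add_mul_mod_self_left _ _ _).symm
    _ = (a * i' + b * k) % b := by rw [heq]
    _ = a * i' % b := Nat.add_mul_mod_self_left _ _ _
  have : i ≡ i' [MOD b] := Nat.ModEq.cancel_left_of_coprime (by
    rwa [Nat.coprime_comm] at hcop) hmod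
  have := this.symm
  unfold Nat.ModEq at this
  rw [Nat.mod_eq_of_lt hi, Nat.mod_eq_of_lt hi'] at this
  exact this

lemma key {E : Type*} [Field E] {a b : ℕ} (ha : 0 < a) (hb : 0 < b)
    (hcop : Nat.Coprime a b) {r : Polynomial (Polynomial E)}
    (hdeg : r.natDegree < b) (h0 : psi E a b r = 0) : r = 0 := by
  have hsum : psi E a b r
      = ∑ i ∈ Finset.range b, (expand E b) (r.coeff i) * X ^ (a * i) := by
    rw [psi_apply, eval₂_eq_sum_range' _ hdeg]
    exact Finset.sum_congr rfl fun i _ => by rw [← pow_mul]; rfl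
  ext i j
  simp only [coeff_zero]
  by_cases hi : i < b
  · have hc : (psi E a b r).coeff (a * i + b * j) = (r.coeff i).coeff j := by
      rw [hsum, finset_sum_coeff]
      rw [Finset.sum_eq_single_of_mem i (Finset.mem_range.mpr hi)]
      · rw [coeff_mul_X_pow', if_pos (Nat.le_add_right _ _), coeff_expand hb,
          if_pos ⟨j, by omega⟩]
        have h3 : a * i + b * j - a * i = b * j := by omega
        rw [h3, Nat.mul_div_cancel_left _ hb]
      · intro i' hmem hne
        rw [coeff_mul_X_pow']
        split_ifs with h1
        · rw [coeff_expand hb]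
          split_ifs with h2
          · exact absurd (arith_key hcop hi (Finset.mem_range.mp hmem) h1 h2) hne
          · rfl
        · rfl
    rw [h0, coeff_zero] at hc
    exact hc.symm
  · rw [coeff_eq_zero_of_natDegree_lt (lt_of_lt_of_le hdeg (not_lt.mp hi)), coeff_zero]

theorem stmt_8 (a b : ℕ) (ha : 0 < a) (hb : 0 < b) (hab : a ≠ b) (hcop : Nat.Coprime a b)
    (E : Type*) [Field E] :
    RingHom.ker (MvPolynomial.aeval
        (fun i : Fin 2 => if i = 0 then (Polynomial.X : Polynomial E) ^ a
          else Polynomial.X ^ b) : MvPolynomial (Fin 2) E →ₐ[E] Polynomial E) =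
      Ideal.span {MvPolynomial.X 0 ^ b - MvPolynomial.X 1 ^ a} := by
  set Φ := (MvPolynomial.aeval
        (fun i : Fin 2 => if i = 0 then (Polynomial.X : Polynomial E) ^ a
          else Polynomial.X ^ b) : MvPolynomial (Fin 2) E →ₐ[E] Polynomial E)
  -- forward hom to E[x][y]
  set e : MvPolynomial (Fin 2) E →+* Polynomial (Polynomial E) :=
    (MvPolynomial.eval₂Hom ((Polynomial.C.comp Polynomial.C : E →+* Polynomial (Polynomial E)))
      (fun i : Fin 2 => if i = 0 then Polynomial.X else Polynomial.C Polynomial.X)) with he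
  -- backward hom
  set e' : Polynomial (Polynomial E) →+* MvPolynomial (Fin 2) E :=
    eval₂RingHom (eval₂RingHom MvPolynomial.C (MvPolynomial.X 1)) (MvPolynomial.X 0) with he'
  have he'e : ∀ f, e' (e f) = f := by
    intro f
    have : e'.comp e = RingHom.id _ := by
      apply MvPolynomial.ringHom_ext
      · intro r
        simp [he, he', MvPolynomial.eval₂Hom_C]
      · intro i
        fin_cases i <;> simp [he, he']
    calc e' (e f) = (e'.comp e) f := rfl
    _ = f := by rw [this]; rfl
  have hcomm : ∀ f, (psi E a b) (e f) = Φ f := by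
    intro f
    have : (psi E a b).comp e = Φ.toRingHom := by
      apply MvPolynomial.ringHom_ext
      · intro r
        simp [he, psi, MvPolynomial.eval₂Hom_C, MvPolynomial.algebraMap_eq]
      · intro i
        fin_cases i <;>
          simp [he, psi, Φ, expand_X]
    calc (psi E a b) (e f) = ((psi E a b).comp e) f := rfl
    _ = Φ f := by rw [this]; rfl
  apply le_antisymm
  · intro f hf
    rw [RingHom.mem_ker] at hf
    set p : Polynomial (Polynomial E) := X ^ b - C (X ^ a) with hp
    have hmonic : p.Monic := monic_X_pow_sub_C _ hb.ne'
    have hpsi_p : psi E a b p = 0 := by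
      have h1 : psi E a b (X ^ b) = X ^ (a * b) := by
        rw [map_pow, psi_apply, eval₂_X, ← pow_mul]
      have h2 : psi E a b (C (X ^ a)) = X ^ (a * b) := by
        rw [psi_apply, eval₂_C]
        show (expand E b) (X ^ a) = _
        rw [map_pow, expand_X, ← pow_mul, mul_comm]
      rw [hp, map_sub, h1, h2, sub_self]
    set F := e f with hF
    have hpsiF : psi E a b F = 0 := by rw [hcomm f, hf]
    have hrem : psi E a b (F %ₘ p) = 0 := by
      have := modByMonic_add_div F p
      have h2 : psi E a b (F %ₘ p) + psi E a b p * psi E a b (F /ₘ p) = psi E a b F := by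
        rw [← map_mul, ← map_add, this]
      rw [hpsi_p, hpsiF, zero_mul, add_zero] at h2
      exact h2
    have hdeg : (F %ₘ p).natDegree < b := by
      by_cases h : F %ₘ p = 0
      · rw [h]; simpa using hb
      · rw [natDegree_lt_iff_degree_lt h]
        have := degree_modByMonic_lt F hmonic
        rwa [hp, degree_X_pow_sub_C hb] at this
    have hzero : F %ₘ p = 0 := key ha hb hcop hdeg hrem
    have hfac : F = p * (F /ₘ p) := by
      have := modByMonic_add_div F p
      rw [hzero, zero_add] at this
      exact this.symm
    rw [Ideal.mem_span_singleton]
    refine ⟨e' (F /ₘ p), ?_⟩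
    have he'p : e' p = MvPolynomial.X 0 ^ b - MvPolynomial.X 1 ^ a := by
      have h1 : e' X = MvPolynomial.X 0 := eval₂_X _ _
      have h2 : e' (C X) = MvPolynomial.X 1 := by
        show eval₂ _ _ (C X) = _
        rw [eval₂_C]
        exact eval₂_X _ _
      rw [hp, map_sub, map_pow, map_pow, map_pow, h1, h2]
    calc f = e' F := (he'e f).symm
    _ = e' (p * (F /ₘ p)) := congrArg e' hfac
    _ = e' p * e' (F /ₘ p) := map_mul _ _ _
    _ = (MvPolynomial.X 0 ^ b - MvPolynomial.X 1 ^ a) * e' (F /ₘ p) := by rw [he'p]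
  · rw [Ideal.span_le, Set.singleton_subset_iff, SetLike.mem_coe, RingHom.mem_ker,
      map_sub, map_pow, map_pow, MvPolynomial.aeval_X, MvPolynomial.aeval_X,
      if_pos rfl, if_neg (by decide : (1 : Fin 2) ≠ 0), ← pow_mul, ← pow_mul,
      mul_comm, sub_self]
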